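/- Fix s ≥ 1, P_s = {a_1,…,a_s, c | a_i < c}, with μ the Möbius function of P_s^*. For 1 ≤ m ≤ n: μ(a_1^m, c^n) + μ(a_1^{m−1}, c^{n−1}) = s·μ(a_1^m, c^{n−1}). -/

import Mathlib

/-- The alphabet `P_s = {a_1, …, a_s, c}` with `a_i < c`: `some i` is `a_i`, `none` is `c`. -/
abbrev Letter (s : ℕ) := Option (Fin s)

/-- The generalized subword order on words over `P_s`. -/
def WLE {s : ℕ} (u w : List (Letter s)) : Prop :=
  ∃ w', w'.Sublist w ∧ List.Forall₂ (fun x y => x = y ∨ y = none) u w'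

namespace MuRec


variable {s : ℕ}

/-- Inductive characterization of the generalized subword order. -/
inductive SLE : List (Letter s) → List (Letter s) → Prop
  | nil : SLE [] []
  | skip {u w} (y) : SLE u w → SLE u (y :: w)
  | cons {u w x y} : (x = y ∨ y = none) → SLE u w → SLE (x :: u) (y :: w)

theorem SLE.nil_left : ∀ w : List (Letter s), SLE [] w
  | [] => .nil
  | y :: w => .skip y (SLE.nil_left w)

theorem sle_nil_iff {u : List (Letter s)} : SLE u [] ↔ u = [] := by
  constructor
  · rintro h; cases h; rfl
  · rintro rfl; exact .nil

theorem SLE.refl : ∀ w : List (Letter s), SLE w w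
  | [] => .nil
  | y :: w => .cons (Or.inl rfl) (SLE.refl w)

theorem SLE.tail_left' {v w : List (Letter s)} (h : SLE v w) :
    ∀ x u, v = x :: u → SLE u w := by
  induction h with
  | nil => intro x u h; cases h
  | skip y h ih => intro x u rfl; exact .skip y (ih x u rfl)
  | cons hxy h ih => intro x u hv; cases hv; exact .skip _ h

theorem SLE.tail_left {x : Letter s} {u w} (h : SLE (x :: u) w) : SLE u w :=
  h.tail_left' x u rfl

theorem SLE.length_le {u w : List (Letter s)} (h : SLE u w) : u.length ≤ w.length := by
  induction h with
  | nil => simp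
  | skip y h ih => simp; omega
  | cons hxy h ih => simpa using ih

/-- rank used for well-founded recursion over the order. -/
def rank (w : List (Letter s)) : ℕ := w.length + w.count none

theorem rank_lt_of_sle {z w : List (Letter s)} (h : SLE z w) :
    z = w ∨ rank z < rank w := by
  induction h with
  | nil => exact Or.inl rfl
  | @skip u w y h ih =>
    right
    have hle : rank u ≤ rank w := by
      rcases ih with rfl | hlt
      · exact le_refl _
      · exact le_of_lt hlt
    have : rank (y :: w) = rank w + 1 + (if y = none then 1 else 0) := by
      simp [rank, List.count_cons]
      split <;> omega
    rw [this]; omega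
  | @cons u w x y hxy h ih =>
    have hcx : rank (x :: u) = rank u + 1 + (if x = none then 1 else 0) := by
      simp [rank, List.count_cons]; split <;> omega
    have hcy : rank (y :: w) = rank w + 1 + (if y = none then 1 else 0) := by
      simp [rank, List.count_cons]; split <;> omega
    rcases ih with rfl | hlt
    · rcases hxy with rfl | rfl
      · exact Or.inl rfl
      · by_cases hx : x = none
        · subst hx; exact Or.inl rfl
        · right; rw [hcx, hcy]; simp [hx]
    · right; rw [hcx, hcy]
      have hind : (if x = none then (1:ℕ) else 0) ≤ (if y = none then 1 else 0) := by
        rcases hxy with rfl | rfl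
        · exact le_refl _
        · simp; split <;> omega
      omega

theorem sle_rank_le {z w : List (Letter s)} (h : SLE z w) : rank z ≤ rank w := by
  rcases rank_lt_of_sle h with rfl | h; exacts [le_refl _, le_of_lt h]

/-- WLE agrees with SLE. -/
theorem wle_iff_sle {u w : List (Letter s)} : WLE u w ↔ SLE u w := by
  constructor
  · rintro ⟨w', hsub, hF⟩
    induction hsub generalizing u with
    | slnil => rw [List.forall₂_nil_right_iff.mp hF]; exact .nil
    | cons y hsub ih => exact .skip y (ih hF)
    | cons_cons y hsub ih =>
      cases hF with
      | cons hxy hF => exact .cons hxy (ih hF)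
  · intro h
    induction h with
    | nil => exact ⟨[], List.Sublist.refl _, List.Forall₂.nil⟩
    | skip y h ih =>
      obtain ⟨w', hsub, hF⟩ := ih
      exact ⟨w', hsub.trans (List.sublist_cons_self y _), hF⟩
    | cons hxy h ih =>
      obtain ⟨w', hsub, hF⟩ := ih
      exact ⟨_ :: w', hsub.cons₂ _, List.Forall₂.cons hxy hF⟩

theorem sle_cons_none {z : List (Letter s)} {w} :
    SLE z (none :: w) ↔ z = [] ∨ ∃ t z', z = t :: z' ∧ SLE z' w := by
  constructor
  · intro h
    match z, h with
    | [], _ => exact Or.inl rfl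
    | t :: z', h =>
      right
      refine ⟨t, z', rfl, ?_⟩
      cases h with
      | skip _ h => exact h.tail_left
      | cons hxy h => exact h
  · rintro (rfl | ⟨t, z', rfl, h⟩)
    · exact SLE.nil_left _
    · exact .cons (Or.inr rfl) h

theorem sle_cons_some {z : List (Letter s)} {j w} :
    SLE z (some j :: w) ↔ SLE z w ∨ ∃ z', z = some j :: z' ∧ SLE z' w := by
  constructor
  · intro h
    cases h with
    | skip _ h => exact Or.inl h
    | cons hxy h =>
      rcases hxy with rfl | h'
      · exact Or.inr ⟨_, rfl, h⟩
      · cases h'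
  · rintro (h | ⟨z', rfl, h⟩)
    · exact .skip _ h
    · exact .cons (Or.inl rfl) h


variable {s : ℕ}
-- part1


/-- `A a m = a_1^m` (with `a` playing the role of `a_1`). -/
def A (a : Fin s) (m : ℕ) : List (Letter s) := List.replicate m (some a)

theorem A_succ (a : Fin s) (m : ℕ) : A a (m+1) = some a :: A a m := rfl

theorem sle_A_nil {a : Fin s} {m : ℕ} : SLE (A a m) [] ↔ m = 0 := by
  rw [sle_nil_iff]; cases m <;> simp [A]

theorem sle_A_zero {a : Fin s} (w : List (Letter s)) : SLE (A a 0) w :=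
  SLE.nil_left w

theorem sle_A_succ_none {a : Fin s} {m : ℕ} {w : List (Letter s)} :
    SLE (A a (m+1)) (none :: w) ↔ SLE (A a m) w := by
  rw [sle_cons_none]
  constructor
  · rintro (h | ⟨t, z', heq, h⟩)
    · simp [A] at h
    · rw [A_succ] at heq; cases heq; exact h
  · intro h; exact Or.inr ⟨_, _, A_succ a m, h⟩

theorem sle_A_mono {a : Fin s} {m : ℕ} {w : List (Letter s)} (h : SLE (A a (m+1)) w) :
    SLE (A a m) w := by
  rw [A_succ] at h; exact h.tail_left

theorem sle_A_succ_some_eq {a : Fin s} {m : ℕ} {w : List (Letter s)} :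
    SLE (A a (m+1)) (some a :: w) ↔ SLE (A a m) w := by
  rw [sle_cons_some]
  constructor
  · rintro (h | ⟨z', heq, h⟩)
    · exact sle_A_mono h
    · rw [A_succ] at heq; cases heq; exact h
  · intro h; exact Or.inr ⟨_, A_succ a m, h⟩

theorem sle_A_succ_some_ne {a j : Fin s} (hj : j ≠ a) {m : ℕ} {w : List (Letter s)} :
    SLE (A a (m+1)) (some j :: w) ↔ SLE (A a (m+1)) w := by
  rw [sle_cons_some]
  constructor
  · rintro (h | ⟨z', heq, h⟩)
    · exact h
    · rw [A_succ] at heq; simp at heq; exact absurd heq.1.symm hj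
  · exact Or.inl

/-- indicator for "starts with a non-c letter" -/
def dC (w : List (Letter s)) : ℤ :=
  match w with
  | some _ :: _ => 1
  | _ => 0

/-- The explicit Möbius values `M m w = μ(a^m, w)`. -/
def M (s : ℕ) (a : Fin s) : ℕ → List (Letter s) → ℤ
  | m, [] => if m = 0 then 1 else 0
  | m, (none :: w) =>
      ((s : ℤ) - dC w) * M s a m w -
        (match m with
          | 0 => if w = [] then 1 else 0
          | m' + 1 => M s a m' w)
  | m, (some i :: w) =>
      match m with
      | 0 => if w.head? = some (some i) then 0 else -(M s a 0 w)
      | m' + 1 =>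
          if i = a then
            M s a m' w - (if w.head? = some (some a) then 0 else 1) * M s a (m'+1) w
          else if w.head? = some (some i) then 0 else -(M s a (m'+1) w)

theorem M_nil (a : Fin s) (m : ℕ) : M s a m [] = if m = 0 then 1 else 0 := by
  rw [M]

theorem M_none_zero (a : Fin s) (w : List (Letter s)) :
    M s a 0 (none :: w) = ((s : ℤ) - dC w) * M s a 0 w - (if w = [] then 1 else 0) := by
  rw [M]

theorem M_none_succ (a : Fin s) (m : ℕ) (w : List (Letter s)) :
    M s a (m+1) (none :: w) = ((s : ℤ) - dC w) * M s a (m+1) w - M s a m w := by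
  rw [M]

theorem M_some_zero (a : Fin s) (i : Fin s) (w : List (Letter s)) :
    M s a 0 (some i :: w) = if w.head? = some (some i) then 0 else -(M s a 0 w) := by
  rw [M]

theorem M_some_succ_eq (a : Fin s) (m : ℕ) (w : List (Letter s)) :
    M s a (m+1) (some a :: w) =
      M s a m w - (if w.head? = some (some a) then 0 else 1) * M s a (m+1) w := by
  rw [M]; simp

theorem M_some_succ_ne (a : Fin s) {i : Fin s} (hi : i ≠ a) (m : ℕ) (w : List (Letter s)) :
    M s a (m+1) (some i :: w) = if w.head? = some (some i) then 0 else -(M s a (m+1) w) := by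
  rw [M]; simp [hi]

/-- Lemma (b): M vanishes off the up-set of `a^m`. -/
theorem M_eq_zero_of_not_sle (a : Fin s) :
    ∀ (w : List (Letter s)) (m : ℕ), ¬ SLE (A a m) w → M s a m w = 0 := by
  intro w
  induction w with
  | nil =>
    intro m h
    rw [M_nil]
    rcases m with _ | m
    · exact absurd (SLE.nil) h
    · simp
  | cons x w ih =>
    intro m h
    rcases m with _ | m
    · exact absurd (SLE.nil_left _) h
    rcases x with _ | i
    · -- x = none
      rw [M_none_succ]
      have h1 : ¬ SLE (A a m) w := fun hh => h (sle_A_succ_none.mpr hh)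
      have h2 : ¬ SLE (A a (m+1)) w := fun hh => h1 (sle_A_mono hh)
      rw [ih _ h1, ih _ h2]; ring
    · by_cases hi : i = a
      · rcases hi.symm with rfl
        rw [M_some_succ_eq]
        have h1 : ¬ SLE (A a m) w := fun hh => h (sle_A_succ_some_eq.mpr hh)
        have h2 : ¬ SLE (A a (m+1)) w := fun hh => h1 (sle_A_mono hh)
        rw [ih _ h1, ih _ h2]; ring
      · rw [M_some_succ_ne a hi]
        have h2 : ¬ SLE (A a (m+1)) w := fun hh => h ((sle_A_succ_some_ne hi).mpr hh)
        rw [ih _ h2]; split <;> ring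

theorem M_A_self (a : Fin s) : ∀ m : ℕ, M s a m (A a m) = 1 := by
  intro m
  induction m with
  | zero => simp [A, M_nil]
  | succ m ih =>
    rw [A_succ, M_some_succ_eq]
    rcases m with _ | m
    · simp [A, M_nil]
    · have hh : (A a (m+1)).head? = some (some a) := by rw [A_succ]; rfl
      rw [hh, ih]; simp

/-- All words of length ≤ L. -/
def wordsF (s : ℕ) : ℕ → Finset (List (Letter s))
  | 0 => {[]}
  | L + 1 => insert []
      ((Finset.univ (α := Letter s) ×ˢ wordsF s L).image fun p => p.1 :: p.2)

theorem mem_wordsF {z : List (Letter s)} {L : ℕ} : z ∈ wordsF s L ↔ z.length ≤ L := by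
  induction L generalizing z with
  | zero => simp [wordsF, List.length_eq_zero_iff]
  | succ L ih =>
    rw [wordsF]
    simp only [Finset.mem_insert, Finset.mem_image, Finset.mem_product]
    constructor
    · rintro (rfl | ⟨⟨t, z'⟩, ⟨_, hz'⟩, rfl⟩)
      · simp
      · simp only [List.length_cons]
        exact Nat.succ_le_succ (ih.mp hz')
    · intro hlen
      rcases z with _ | ⟨t, z'⟩
      · exact Or.inl rfl
      · right
        exact ⟨(t, z'), ⟨Finset.mem_univ _, ih.mpr (by show z'.length ≤ L; simp at hlen; omega)⟩, rfl⟩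

theorem wordsF_mono {L L' : ℕ} (h : L ≤ L') : wordsF s L ⊆ wordsF s L' := by
  intro z hz; rw [mem_wordsF] at *; omega

theorem sum_wordsF_succ (L : ℕ) (f : List (Letter s) → ℤ) :
    ∑ z ∈ wordsF s (L+1), f z
      = f [] + ∑ t : Letter s, ∑ z' ∈ wordsF s L, f (t :: z') := by
  rw [wordsF, Finset.sum_insert (by simp),
    Finset.sum_image (by rintro ⟨t, z⟩ _ ⟨t', z'⟩ _ h; simpa [Prod.ext_iff] using h),
    Finset.sum_product]



open scoped Classical

noncomputable def S (a : Fin s) (m : ℕ) (w : List (Letter s)) : ℤ :=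
  ∑ z ∈ wordsF s w.length, if SLE (A a m) z ∧ SLE z w then M s a m z else 0

theorem S_def (a : Fin s) (m : ℕ) (w : List (Letter s)) :
    S a m w = ∑ z ∈ wordsF s w.length,
      if SLE (A a m) z ∧ SLE z w then M s a m z else 0 := rfl

theorem S_indep (a : Fin s) (m : ℕ) (w : List (Letter s)) {L : ℕ} (hL : w.length ≤ L) :
    ∑ z ∈ wordsF s L, (if SLE (A a m) z ∧ SLE z w then M s a m z else 0) = S a m w := by
  rw [S]
  symm
  apply Finset.sum_subset (wordsF_mono hL)
  intro z _ hz
  rw [if_neg]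
  rintro ⟨_, h2⟩
  exact hz (mem_wordsF.mpr (h2.length_le))

theorem sle_cons_cons_none {t : Letter s} {z' w : List (Letter s)} :
    SLE (t :: z') (none :: w) ↔ SLE z' w := by
  rw [sle_cons_none]
  constructor
  · rintro (h | ⟨t', z'', heq, h⟩)
    · cases h
    · cases heq; exact h
  · intro h; exact Or.inr ⟨t, z', rfl, h⟩

theorem sle_cons_cons_some {t : Letter s} {j : Fin s} {z' w : List (Letter s)} :
    SLE (t :: z') (some j :: w) ↔ SLE (t :: z') w ∨ (t = some j ∧ SLE z' w) := by
  rw [sle_cons_some]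
  constructor
  · rintro (h | ⟨z'', heq, h⟩)
    · exact Or.inl h
    · cases heq; exact Or.inr ⟨rfl, h⟩
  · rintro (h | ⟨rfl, h⟩)
    · exact Or.inl h
    · exact Or.inr ⟨z', rfl, h⟩

theorem dC_nil : dC ([] : List (Letter s)) = 0 := rfl
theorem dC_none (r : List (Letter s)) : dC (none :: r) = 0 := rfl
theorem dC_some (k : Fin s) (r : List (Letter s)) : dC (some k :: r) = 1 := rfl

theorem sum_fin_ite (T : Finset (Fin s)) (k : Fin s) (d : ℤ) :
    ∑ i ∈ T, (if k = i then 0 else d) = T.card * d - (if k ∈ T then d else 0) := by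
  have h : ∀ i ∈ T, (if k = i then (0:ℤ) else d) = d - (if k = i then d else 0) := by
    intro i _; split <;> ring
  rw [Finset.sum_congr rfl h, Finset.sum_sub_distrib, Finset.sum_const,
    Finset.sum_ite_eq, nsmul_eq_mul]

/-- The sum over all one-letter extensions `t :: z'` of the indicatored M-values. -/
theorem sum_letter (a : Fin s) (m : ℕ) (z' : List (Letter s)) :
    ∑ t : Letter s, (if SLE (A a m) (t :: z') then M s a m (t :: z') else 0)
      = if m = 0 then (if z' = [] then -1 else 0) else 0 := by
  have hcard : ((Finset.univ : Finset (Fin s)).card : ℤ) = s := by simp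
  rw [Fintype.sum_option]
  rcases m with _ | m'
  · -- m = 0
    have h0 : ∀ z, SLE (A a 0) z := sle_A_zero
    rw [if_pos (h0 _), M_none_zero, if_pos rfl,
      show (∑ i : Fin s, if SLE (A a 0) (some i :: z') then M s a 0 (some i :: z') else 0)
          = ∑ i : Fin s, (if z'.head? = some (some i) then 0 else -(M s a 0 z')) from
        Finset.sum_congr rfl fun i _ => by rw [if_pos (h0 _), M_some_zero]]
    rcases z' with _ | ⟨t', r⟩
    · simp only [List.head?_nil, reduceCtorEq, if_false, if_pos rfl, Finset.sum_const,
        dC_nil, M_nil, nsmul_eq_mul, hcard, ite_true, ite_false]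
      ring
    · have hz : ¬ ((t' :: r : List (Letter s)) = []) := by simp
      simp only [if_neg hz]
      rcases t' with _ | k
      · simp only [List.head?_cons, Option.some.injEq, reduceCtorEq, if_false,
          Finset.sum_const, dC_none, nsmul_eq_mul, hcard]
        ring
      · simp only [List.head?_cons, Option.some.injEq, dC_some]
        rw [sum_fin_ite]
        simp only [Finset.mem_univ, if_pos, hcard]
        ring
  · -- m = m' + 1
    rw [if_neg (Nat.succ_ne_zero m')]
    by_cases h1 : SLE (A a m') z'
    · by_cases h2 : SLE (A a (m'+1)) z'
      · rw [if_pos (sle_A_succ_none.mpr h1), M_none_succ]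
        have key : ∑ i : Fin s, (if SLE (A a (m'+1)) (some i :: z') then M s a (m'+1) (some i :: z') else 0)
            = (M s a m' z' - (if z'.head? = some (some a) then 0 else 1) * M s a (m'+1) z')
              + ∑ i ∈ Finset.univ.erase a,
                  (if z'.head? = some (some i) then 0 else -(M s a (m'+1) z')) := by
          rw [← Finset.add_sum_erase _ _ (Finset.mem_univ a)]
          congr 1
          · rw [if_pos (sle_A_succ_some_eq.mpr h1), M_some_succ_eq]
          · refine Finset.sum_congr rfl fun i hi => ?_
            have hia : i ≠ a := (Finset.mem_erase.mp hi).1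
            rw [if_pos ((sle_A_succ_some_ne hia).mpr h2), M_some_succ_ne a hia]
        rw [key]
        have hecard : ((Finset.univ.erase a : Finset (Fin s)).card : ℤ) = (s:ℤ) - 1 := by
          rw [Finset.card_erase_of_mem (Finset.mem_univ a)]
          have : (0:ℕ) < s := a.pos
          push_cast [Finset.card_univ, Fintype.card_fin]
          omega
        rcases z' with _ | ⟨t', r⟩
        · simp only [List.head?_nil, reduceCtorEq, if_false, Finset.sum_const, dC_nil,
            nsmul_eq_mul, hecard]
          ring
        · rcases t' with _ | k
          · simp only [List.head?_cons, Option.some.injEq, reduceCtorEq, if_false,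
              Finset.sum_const, dC_none, nsmul_eq_mul, hecard]
            ring
          · simp only [List.head?_cons, Option.some.injEq, dC_some]
            rw [sum_fin_ite, hecard]
            by_cases hk : k = a
            · simp only [hk, if_pos rfl, Finset.mem_erase, ne_eq, not_true_eq_false,
                false_and, if_false, ite_true, ite_false]
              ring
            · have h2' : k ∈ Finset.univ.erase a := Finset.mem_erase.mpr ⟨hk, Finset.mem_univ k⟩
              simp only [if_neg hk, if_pos h2']
              ring
      · have hM0 : M s a (m'+1) z' = 0 := M_eq_zero_of_not_sle a z' _ h2
        rw [if_pos (sle_A_succ_none.mpr h1), M_none_succ, hM0]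
        have key : ∑ i : Fin s, (if SLE (A a (m'+1)) (some i :: z') then M s a (m'+1) (some i :: z') else 0)
            = M s a m' z' := by
          rw [← Finset.add_sum_erase _ _ (Finset.mem_univ a)]
          have hz : ∀ i ∈ Finset.univ.erase a,
              (if SLE (A a (m'+1)) (some i :: z') then M s a (m'+1) (some i :: z') else 0) = 0 := by
            intro i hi
            have hia : i ≠ a := (Finset.mem_erase.mp hi).1
            rw [if_neg (fun hh => h2 ((sle_A_succ_some_ne hia).mp hh))]
          rw [Finset.sum_eq_zero hz, add_zero,
            if_pos (sle_A_succ_some_eq.mpr h1), M_some_succ_eq, hM0]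
          ring
        rw [key]
        ring
    · have h2 : ¬ SLE (A a (m'+1)) z' := fun hh => h1 (sle_A_mono hh)
      rw [if_neg (fun hh => h1 (sle_A_succ_none.mp hh))]
      have key : ∑ i : Fin s, (if SLE (A a (m'+1)) (some i :: z') then M s a (m'+1) (some i :: z') else 0) = 0 := by
        refine Finset.sum_eq_zero fun i _ => ?_
        by_cases hia : i = a
        · subst hia
          exact if_neg (fun hh => h1 (sle_A_succ_some_eq.mp hh))
        · exact if_neg (fun hh => h2 ((sle_A_succ_some_ne hia).mp hh))
      rw [key]
      ring

theorem ite_split (P Q R : Prop) (b : ℤ) :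
    (if P ∧ (Q ∨ R) then b else 0)
      = ((if P ∧ Q then b else 0) + (if P ∧ R then b else 0)) - (if P ∧ Q ∧ R then b else 0) := by
  by_cases hP : P <;> by_cases hQ : Q <;> by_cases hR : R <;> simp [hP, hQ, hR]

theorem cons_reindex (x : Letter s) (w : List (Letter s)) (F : List (Letter s) → ℤ) :
    ∑ z' ∈ wordsF s w.length, (if SLE (x :: z') w then F (x :: z') else 0)
      = ∑ z ∈ wordsF s w.length, (if z.head? = some x ∧ SLE z w then F z else 0) := by
  set L := w.length with hL
  set G : List (Letter s) → ℤ := fun z => if z.head? = some x ∧ SLE z w then F z else 0 with hG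
  have h1 : ∑ z' ∈ wordsF s L, (if SLE (x :: z') w then F (x :: z') else 0)
      = ∑ z' ∈ wordsF s L, G (x :: z') := by
    refine Finset.sum_congr rfl fun z' _ => ?_
    rw [hG]
    simp only [List.head?_cons, Option.some.injEq, true_and]
  have eimg : ∑ z ∈ (wordsF s L).image (fun z' => x :: z'), G z
      = ∑ z' ∈ wordsF s L, G (x :: z') :=
    Finset.sum_image (by intro z1 _ z2 _ h; simpa using h)
  rw [h1, ← eimg]
  have sub1 : (wordsF s L).image (fun z' => x :: z') ⊆ wordsF s (L+1) := by
    intro z hz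
    rw [Finset.mem_image] at hz
    obtain ⟨z', hz', rfl⟩ := hz
    rw [mem_wordsF] at *
    simpa using hz'
  have e2 : ∑ z ∈ (wordsF s L).image (fun z' => x :: z'), G z = ∑ z ∈ wordsF s (L+1), G z := by
    apply Finset.sum_subset sub1
    intro z hz hnz
    show (if z.head? = some x ∧ SLE z w then F z else 0) = 0
    rw [if_neg]
    rintro ⟨hhead, hsle⟩
    rcases z with _ | ⟨t, z'⟩
    · simp at hhead
    · simp only [List.head?_cons, Option.some.injEq] at hhead
      subst hhead
      apply hnz
      rw [Finset.mem_image]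
      refine ⟨z', ?_, rfl⟩
      rw [mem_wordsF]
      have := hsle.length_le
      simp at this
      omega
  have e3 : ∑ z ∈ wordsF s L, G z = ∑ z ∈ wordsF s (L+1), G z := by
    apply Finset.sum_subset (wordsF_mono (Nat.le_succ L))
    intro z hz hnz
    show (if z.head? = some x ∧ SLE z w then F z else 0) = 0
    rw [if_neg]
    rintro ⟨-, hsle⟩
    exact hnz (mem_wordsF.mpr hsle.length_le)
  rw [e2, e3]

theorem ite_sle_swap (a : Fin s) (m : ℕ) (z : List (Letter s)) (Q : Prop) [Decidable Q] :
    (if SLE (A a m) z ∧ Q then M s a (m+1) z else 0)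
      = (if SLE (A a (m+1)) z ∧ Q then M s a (m+1) z else 0) := by
  by_cases h2 : SLE (A a (m+1)) z
  · have h1 : SLE (A a m) z := sle_A_mono h2
    simp [h1, h2]
  · rw [M_eq_zero_of_not_sle a z _ h2]
    simp

theorem E0_eq (a : Fin s) (m : ℕ) (v : List (Letter s)) :
    (if SLE (A a m) [] ∧ SLE [] v then M s a m [] else 0) = if m = 0 then 1 else 0 := by
  rcases m with _ | m'
  · rw [if_pos ⟨SLE.nil, SLE.nil_left v⟩, M_nil]
  · rw [if_neg, if_neg (Nat.succ_ne_zero m')]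
    rintro ⟨h, -⟩
    exact Nat.succ_ne_zero m' (sle_A_nil.mp h)

/-- The key decomposition: `S a m (x :: w) = S a m w + D2 - D3` for a non-`c` letter `x`. -/
theorem S_cons_some (a : Fin s) (m : ℕ) (j : Fin s) (w : List (Letter s))
    (ihm : S a m w = if w = A a m then 1 else 0) :
    S a m (some j :: w)
      = (if w = A a m then 1 else 0)
        + (∑ z' ∈ wordsF s w.length,
            (if SLE (A a m) (some j :: z') ∧ SLE z' w then M s a m (some j :: z') else 0))
        - (∑ z' ∈ wordsF s w.length,
            (if SLE (some j :: z') w then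
              (if SLE (A a m) (some j :: z') then M s a m (some j :: z') else 0) else 0)) := by
  rw [S_def]
  simp only [List.length_cons]
  rw [sum_wordsF_succ]
  have hsplit : ∀ t : Letter s, ∀ z' ∈ wordsF s w.length,
      (if SLE (A a m) (t :: z') ∧ SLE (t :: z') (some j :: w) then M s a m (t :: z') else 0)
        = ((if SLE (A a m) (t :: z') ∧ SLE (t :: z') w then M s a m (t :: z') else 0)
            + (if SLE (A a m) (t :: z') ∧ (t = some j ∧ SLE z' w) then M s a m (t :: z') else 0))
          - (if SLE (A a m) (t :: z') ∧ SLE (t :: z') w ∧ (t = some j ∧ SLE z' w)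
              then M s a m (t :: z') else 0) := by
    intro t z' _
    by_cases hP : SLE (A a m) (t :: z') <;> by_cases hQ : SLE (t :: z') w <;>
      by_cases hR : t = some j ∧ SLE z' w <;>
        simp [sle_cons_cons_some, hP, hQ, hR]
  rw [Finset.sum_congr rfl fun t _ => Finset.sum_congr rfl (hsplit t)]
  simp only [Finset.sum_add_distrib, Finset.sum_sub_distrib]
  have hD1 : (if SLE (A a m) [] ∧ SLE [] (some j :: w) then M s a m [] else 0)
      + ∑ t : Letter s, ∑ z' ∈ wordsF s w.length,
          (if SLE (A a m) (t :: z') ∧ SLE (t :: z') w then M s a m (t :: z') else 0)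
      = if w = A a m then 1 else 0 := by
    have base : ∑ z ∈ wordsF s (w.length+1), (if SLE (A a m) z ∧ SLE z w then M s a m z else 0)
        = S a m w := S_indep a m w (Nat.le_succ w.length)
    rw [sum_wordsF_succ, E0_eq] at base
    rw [E0_eq, base]
    exact ihm
  have hD2 : ∀ t : Letter s, t ≠ some j → (∑ z' ∈ wordsF s w.length,
      (if SLE (A a m) (t :: z') ∧ (t = some j ∧ SLE z' w) then M s a m (t :: z') else 0)) = 0 := by
    intro t ht
    refine Finset.sum_eq_zero fun z' _ => if_neg ?_
    rintro ⟨-, rfl, -⟩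
    exact ht rfl
  have hD2' : ∑ t : Letter s, ∑ z' ∈ wordsF s w.length,
      (if SLE (A a m) (t :: z') ∧ (t = some j ∧ SLE z' w) then M s a m (t :: z') else 0)
      = ∑ z' ∈ wordsF s w.length,
          (if SLE (A a m) (some j :: z') ∧ SLE z' w then M s a m (some j :: z') else 0) := by
    rw [Fintype.sum_eq_single (some j) hD2]
    refine Finset.sum_congr rfl fun z' _ => if_congr ?_ rfl rfl
    constructor
    · rintro ⟨h1, -, h2⟩; exact ⟨h1, h2⟩
    · rintro ⟨h1, h2⟩; exact ⟨h1, rfl, h2⟩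
  have hD3 : ∀ t : Letter s, t ≠ some j → (∑ z' ∈ wordsF s w.length,
      (if SLE (A a m) (t :: z') ∧ SLE (t :: z') w ∧ (t = some j ∧ SLE z' w)
        then M s a m (t :: z') else 0)) = 0 := by
    intro t ht
    refine Finset.sum_eq_zero fun z' _ => if_neg ?_
    rintro ⟨-, -, rfl, -⟩
    exact ht rfl
  have hD3' : ∑ t : Letter s, ∑ z' ∈ wordsF s w.length,
      (if SLE (A a m) (t :: z') ∧ SLE (t :: z') w ∧ (t = some j ∧ SLE z' w)
        then M s a m (t :: z') else 0)
      = ∑ z' ∈ wordsF s w.length,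
          (if SLE (some j :: z') w then
            (if SLE (A a m) (some j :: z') then M s a m (some j :: z') else 0) else 0) := by
    rw [Fintype.sum_eq_single (some j) hD3]
    refine Finset.sum_congr rfl fun z' _ => ?_
    by_cases h1 : SLE (A a m) (some j :: z') <;> by_cases h2 : SLE (some j :: z') w
    · rw [if_pos ⟨h1, h2, rfl, h2.tail_left⟩, if_pos h2, if_pos h1]
    · rw [if_neg (by tauto), if_neg h2]
    · rw [if_neg (by tauto), if_pos h2, if_neg h1]
    · rw [if_neg (by tauto), if_neg h2]
  rw [hD2', hD3', ← hD1]
  ring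

/-- The central identity: interval sums of `M` are `δ_{w, a^m}`. -/
theorem S_eq (a : Fin s) : ∀ (w : List (Letter s)) (m : ℕ),
    S a m w = if w = A a m then 1 else 0 := by
  intro w
  induction w with
  | nil =>
    intro m
    rw [S_def]
    show ∑ z ∈ wordsF s 0, _ = _
    rw [wordsF, Finset.sum_singleton]
    rcases m with _ | m'
    · rw [if_pos ⟨SLE.nil, SLE.nil⟩, M_nil]
      simp [A]
    · rw [if_neg (fun h => Nat.succ_ne_zero m' (sle_A_nil.mp h.1)), if_neg]
      intro h
      rw [A_succ] at h
      exact List.cons_ne_nil _ _ h.symm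
  | cons x w ih =>
    intro m
    rcases x with _ | j
    · -- x = none : every term of the double sum vanishes by `sum_letter`
      rw [S_def]
      simp only [List.length_cons]
      rw [sum_wordsF_succ]
      have hin : ∀ t : Letter s, ∀ z' ∈ wordsF s w.length,
          (if SLE (A a m) (t :: z') ∧ SLE (t :: z') (none :: w) then M s a m (t :: z') else 0)
            = (if SLE z' w then (if SLE (A a m) (t :: z') then M s a m (t :: z') else 0) else 0) := by
        intro t z' _
        by_cases h1 : SLE (A a m) (t :: z') <;> by_cases h2 : SLE z' w <;>
          simp [h1, h2, sle_cons_cons_none]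
      rw [Finset.sum_congr rfl fun t _ => Finset.sum_congr rfl (hin t), Finset.sum_comm]
      have hrow : ∀ z' ∈ wordsF s w.length, (∑ t : Letter s,
          (if SLE z' w then (if SLE (A a m) (t :: z') then M s a m (t :: z') else 0) else 0))
            = (if SLE z' w then (if m = 0 then (if z' = [] then (-1:ℤ) else 0) else 0) else 0) := by
        intro z' _
        by_cases h2 : SLE z' w
        · simp only [if_pos h2]
          exact sum_letter a m z'
        · simp [h2]
      rw [Finset.sum_congr rfl hrow, E0_eq]
      have hne : ¬ ((none :: w : List (Letter s)) = A a m) := by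
        rcases m with _ | m'
        · simp [A]
        · rw [A_succ]; simp
      rw [if_neg hne]
      rcases m with _ | m'
      · have hsum : ∑ z' ∈ wordsF s w.length, (if SLE z' w then
            (if (0:ℕ) = 0 then (if z' = [] then (-1:ℤ) else 0) else 0) else 0) = -1 := by
          rw [Finset.sum_eq_single ([] : List (Letter s))]
          · simp [SLE.nil_left]
          · intro z' _ hz'
            by_cases h2 : SLE z' w <;> simp [h2, hz']
          · intro h
            exact absurd (mem_wordsF.mpr (by simp)) h
        rw [hsum]
        norm_num
      · have hsum : ∑ z' ∈ wordsF s w.length, (if SLE z' w then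
            (if (m'+1 : ℕ) = 0 then (if z' = [] then (-1:ℤ) else 0) else 0) else 0) = 0 := by
          refine Finset.sum_eq_zero fun z' _ => ?_
          simp
        rw [hsum]
        norm_num
    · -- x = some j
      rw [S_cons_some a m j w (ih m)]
      have hD3gen : ∀ m' : ℕ, (∑ z' ∈ wordsF s w.length,
          (if SLE (some j :: z') w then
            (if SLE (A a m') (some j :: z') then M s a m' (some j :: z') else 0) else 0))
          = ∑ z ∈ wordsF s w.length,
              (if z.head? = some (some j) ∧ SLE (A a m') z ∧ SLE z w
                then M s a m' z else 0) := by
        intro m'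
        rw [cons_reindex (some j) w (fun z => if SLE (A a m') z then M s a m' z else 0)]
        refine Finset.sum_congr rfl fun z _ => ?_
        by_cases h1 : SLE (A a m') z <;>
          by_cases hc : z.head? = some (some j) <;>
            by_cases hsle : SLE z w <;> simp [h1, hc, hsle]
      rcases m with _ | m'
      · -- m = 0
        have hpt : ∀ z' ∈ wordsF s w.length,
            (if SLE (A a 0) (some j :: z') ∧ SLE z' w then M s a 0 (some j :: z') else 0)
              = -(if SLE (A a 0) z' ∧ SLE z' w then M s a 0 z' else 0)
                + (if z'.head? = some (some j) ∧ SLE (A a 0) z' ∧ SLE z' w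
                    then M s a 0 z' else 0) := by
          intro z' _
          have h0 : ∀ z : List (Letter s), SLE (A a 0) z := sle_A_zero
          by_cases hsle : SLE z' w <;> by_cases hh : z'.head? = some (some j) <;>
            simp [M_some_zero, hsle, hh, h0 (some j :: z'), h0 z']
        rw [Finset.sum_congr rfl hpt, Finset.sum_add_distrib, Finset.sum_neg_distrib,
          ← S_def a 0 w, hD3gen 0, ih 0]
        have hne : ¬ ((some j :: w : List (Letter s)) = A a 0) := by simp [A]
        rw [if_neg hne]
        ring
      · by_cases hj : j = a
        · -- x = some a
          rw [hj] at hD3gen ⊢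
          have hpt : ∀ z' ∈ wordsF s w.length,
              (if SLE (A a (m'+1)) (some a :: z') ∧ SLE z' w then M s a (m'+1) (some a :: z') else 0)
                = ((if SLE (A a m') z' ∧ SLE z' w then M s a m' z' else 0)
                  - (if SLE (A a (m'+1)) z' ∧ SLE z' w then M s a (m'+1) z' else 0))
                  + (if z'.head? = some (some a) ∧ SLE (A a (m'+1)) z' ∧ SLE z' w
                      then M s a (m'+1) z' else 0) := by
            intro z' _
            by_cases h2 : SLE (A a (m'+1)) z'
            · have h1 : SLE (A a m') z' := sle_A_mono h2
              by_cases hsle : SLE z' w <;> by_cases hh : z'.head? = some (some a) <;>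
                simp [sle_A_succ_some_eq, M_some_succ_eq, h1, h2, hsle, hh] <;> ring
            · by_cases h1 : SLE (A a m') z'
              · have hM0 : M s a (m'+1) z' = 0 := M_eq_zero_of_not_sle a z' _ h2
                by_cases hsle : SLE z' w <;> by_cases hh : z'.head? = some (some a) <;>
                  simp [sle_A_succ_some_eq, M_some_succ_eq, h1, h2, hsle, hh, hM0]
              · by_cases hsle : SLE z' w <;>
                  simp [sle_A_succ_some_eq, h1, h2, hsle]
          rw [Finset.sum_congr rfl hpt]
          simp only [Finset.sum_add_distrib, Finset.sum_sub_distrib]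
          rw [← S_def a m' w, ← S_def a (m'+1) w, hD3gen (m'+1), ih m', ih (m'+1)]
          have hiff : ((some a :: w : List (Letter s)) = A a (m'+1)) ↔ w = A a m' := by
            rw [A_succ]; simp
          rw [if_congr hiff rfl rfl]
          ring
        · -- x = some j, j ≠ a
          have hpt : ∀ z' ∈ wordsF s w.length,
              (if SLE (A a (m'+1)) (some j :: z') ∧ SLE z' w then M s a (m'+1) (some j :: z') else 0)
                = -(if SLE (A a (m'+1)) z' ∧ SLE z' w then M s a (m'+1) z' else 0)
                  + (if z'.head? = some (some j) ∧ SLE (A a (m'+1)) z' ∧ SLE z' w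
                      then M s a (m'+1) z' else 0) := by
            intro z' _
            by_cases h2 : SLE (A a (m'+1)) z'
            · by_cases hsle : SLE z' w <;> by_cases hh : z'.head? = some (some j) <;>
                simp [sle_A_succ_some_ne hj, M_some_succ_ne a hj, h2, hsle, hh]
            · by_cases hsle : SLE z' w <;>
                simp [sle_A_succ_some_ne hj, h2, hsle]
          rw [Finset.sum_congr rfl hpt, Finset.sum_add_distrib, Finset.sum_neg_distrib,
            ← S_def a (m'+1) w, hD3gen (m'+1), ih (m'+1)]
          have hne1 : ¬ ((some j :: w : List (Letter s)) = A a (m'+1)) := by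
            rw [A_succ]
            simp only [List.cons.injEq, not_and]
            intro hc
            exact absurd (by simpa using hc) hj
          rw [if_neg hne1]
          ring

/-- Uniqueness: any function satisfying the Möbius axioms agrees with `M` on rows `a^m`. -/
theorem mu_eq_M (a : Fin s)
    (μ : List (Letter s) → List (Letter s) → ℤ)
    (hrefl : ∀ u, μ u u = 1)
    (hnle : ∀ u v, ¬ WLE u v → μ u v = 0)
    (hsum : ∀ u v, WLE u v → u ≠ v →
      ∑ᶠ z ∈ {z : List (Letter s) | WLE u z ∧ WLE z v}, μ u z = 0) :
    ∀ (w : List (Letter s)) (m : ℕ), μ (A a m) w = M s a m w := by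
  suffices H : ∀ (n : ℕ) (w : List (Letter s)), rank w < n →
      ∀ m, μ (A a m) w = M s a m w by
    intro w m
    exact H (rank w + 1) w (Nat.lt_succ_self _) m
  intro n
  induction n with
  | zero => intro w hw; omega
  | succ n ihn =>
    intro w hw m
    by_cases hle : SLE (A a m) w
    · by_cases heq : w = A a m
      · subst heq
        rw [hrefl, M_A_self]
      · have h0 := hsum (A a m) w (wle_iff_sle.mpr hle) (fun h => heq h.symm)
        classical
        set T : Finset (List (Letter s)) :=
          (wordsF s w.length).filter (fun z => SLE (A a m) z ∧ SLE z w) with hT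
        have hset : {z : List (Letter s) | WLE (A a m) z ∧ WLE z w} = ↑T := by
          ext z
          simp only [Set.mem_setOf_eq, hT, Finset.coe_filter, wle_iff_sle, mem_wordsF]
          constructor
          · rintro ⟨h1, h2⟩
            exact ⟨h2.length_le, h1, h2⟩
          · rintro ⟨-, h1, h2⟩
            exact ⟨h1, h2⟩
        rw [hset, finsum_mem_coe_finset] at h0
        have hM : ∑ z ∈ T, M s a m z = 0 := by
          have hS := S_eq a w m
          rw [if_neg heq, S_def, ← Finset.sum_filter] at hS
          exact hS
        have hzero : ∑ z ∈ T, (μ (A a m) z - M s a m z) = 0 := by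
          rw [Finset.sum_sub_distrib, h0, hM]
          ring
        have hwT : w ∈ T := by
          rw [hT, Finset.mem_filter, mem_wordsF]
          exact ⟨le_refl _, hle, SLE.refl w⟩
        have hvanish : ∀ z ∈ T, z ≠ w → μ (A a m) z - M s a m z = 0 := by
          intro z hz hzw
          rw [hT, Finset.mem_filter] at hz
          have hzsle : SLE z w := hz.2.2
          have hrank : rank z < rank w := by
            rcases rank_lt_of_sle hzsle with rfl | h
            · exact absurd rfl hzw
            · exact h
          rw [ihn z (by omega) m]
          ring
        have := Finset.sum_eq_single_of_mem w hwT hvanish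
        rw [hzero] at this
        linarith [this.symm]
    · rw [hnle _ _ (fun h => hle (wle_iff_sle.mp h)), M_eq_zero_of_not_sle a w m hle]

theorem M_c_rec (a : Fin s) (m' n' : ℕ) :
    M s a (m'+1) (List.replicate (n'+1) (none : Letter s))
      + M s a m' (List.replicate n' (none : Letter s))
      = (s : ℤ) * M s a (m'+1) (List.replicate n' (none : Letter s)) := by
  rw [List.replicate_succ, M_none_succ]
  have hdC : dC (List.replicate n' (none : Letter s)) = 0 := by
    rcases n' with _ | k
    · exact dC_nil
    · rw [List.replicate_succ]
      exact dC_none _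
  rw [hdC]
  ring

end MuRec

/-- For `1 ≤ m ≤ n`: `μ(a_1^m, c^n) + μ(a_1^{m−1}, c^{n−1}) = s·μ(a_1^m, c^{n−1})`. -/
theorem mu_a_recurrence (s : ℕ) (hs : 1 ≤ s)
    (μ : List (Letter s) → List (Letter s) → ℤ)
    (hrefl : ∀ u, μ u u = 1)
    (hnle : ∀ u v, ¬ WLE u v → μ u v = 0)
    (hsum : ∀ u v, WLE u v → u ≠ v → ∑ᶠ z ∈ {z : List (Letter s) | WLE u z ∧ WLE z v}, μ u z = 0)
    (m n : ℕ) (hm : 1 ≤ m) (hmn : m ≤ n) :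
    μ (List.replicate m (some (⟨0, hs⟩ : Fin s) : Letter s)) (List.replicate n (none : Letter s)) +
      μ (List.replicate (m - 1) (some (⟨0, hs⟩ : Fin s) : Letter s))
        (List.replicate (n - 1) (none : Letter s))
      = (s : ℤ) * μ (List.replicate m (some (⟨0, hs⟩ : Fin s) : Letter s))
          (List.replicate (n - 1) (none : Letter s)) := by
  set a : Fin s := ⟨0, hs⟩ with ha
  obtain ⟨m', rfl⟩ : ∃ m', m = m' + 1 := ⟨m - 1, by omega⟩
  obtain ⟨n', rfl⟩ : ∃ n', n = n' + 1 := ⟨n - 1, by omega⟩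
  have key := MuRec.mu_eq_M a μ hrefl hnle hsum
  have h1 : List.replicate (m' + 1) (some a : Letter s) = MuRec.A a (m' + 1) := rfl
  have h2 : List.replicate (m' + 1 - 1) (some a : Letter s) = MuRec.A a m' := by
    norm_num [MuRec.A]
  have h3 : (n' + 1 - 1) = n' := by omega
  rw [h1, h2, h3, key, key, key]
  exact MuRec.M_c_rec a m' n'
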